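/- For the WENO-6 subdivision scheme, at odd indices one has |D(S_weno(f))_{2n+1}| ≤ (1/2)·sup_k |Df_k|, where D(S_weno(f))_{2n+1} = f_n - 2·S_weno(f)_{2n+1} + f_{n+1}. -/
import Mathlib


/-- Second difference operator. -/
def D (f : ℤ → ℝ) (n : ℤ) : ℝ := f (n + 1) - 2 * f n + f (n - 1)

/-- For the WENO-6 scheme, at odd indices
`|D(S_weno f)_{2n+1}| = |f_n - 2·S_weno(f)_{2n+1} + f_{n+1}| ≤ (1/2) ⨆ k |Df_k|`,
where `Sodd n = S_weno(f)_{2n+1}` and the convex weights may depend on `n`. -/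
theorem weno6_D_odd (f : ℤ → ℝ) (hf : ∃ C, ∀ n, |f n| ≤ C)
    (a0 a1 a2 : ℤ → ℝ)
    (ha0 : ∀ n, 0 ≤ a0 n) (ha1 : ∀ n, 0 ≤ a1 n) (ha2 : ∀ n, 0 ≤ a2 n)
    (hsum : ∀ n, a0 n + a1 n + a2 n = 1)
    (Sodd : ℤ → ℝ)
    (hS : ∀ n, Sodd n = (f n + f (n + 1)) / 2
        + (a0 n / 16) * D f (n + 2) - ((3 * a0 n + a1 n) / 16) * D f (n + 1)
        - ((a1 n + 3 * a2 n) / 16) * D f n + (a2 n / 16) * D f (n - 1))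
    (n : ℤ) :
    |f n - 2 * Sodd n + f (n + 1)| ≤ (1 / 2) * ⨆ k, |D f k| := by
  obtain ⟨C, hC⟩ := hf
  have hbdd : BddAbove (Set.range fun k => |D f k|) := by
    refine ⟨4 * C, ?_⟩
    rintro x ⟨k, rfl⟩
    have h1 := hC (k + 1)
    have h2 := hC k
    have h3 := hC (k - 1)
    have := abs_le.mp h1
    have := abs_le.mp h2
    have := abs_le.mp h3
    simp only [D]
    rw [abs_le]
    constructor <;> nlinarith [abs_nonneg (f k)]
  set M := ⨆ k, |D f k| with hM
  have hMle : ∀ k, |D f k| ≤ M := fun k => le_ciSup hbdd k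
  have hM0 : 0 ≤ M := le_trans (abs_nonneg _) (hMle 0)
  have hA := abs_le.mp (hMle (n + 2))
  have hB := abs_le.mp (hMle (n + 1))
  have hCc := abs_le.mp (hMle n)
  have hDd := abs_le.mp (hMle (n - 1))
  rw [hS, abs_le]
  constructor <;> nlinarith [mul_nonneg (ha0 n) (by linarith [hA.1] : (0:ℝ) ≤ D f (n + 2) + M),
    mul_nonneg (ha0 n) (by linarith [hA.2] : (0:ℝ) ≤ M - D f (n + 2)),
    mul_nonneg (by linarith [ha0 n, ha1 n] : (0:ℝ) ≤ 3 * a0 n + a1 n) (by linarith [hB.1] : (0:ℝ) ≤ D f (n + 1) + M),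
    mul_nonneg (by linarith [ha0 n, ha1 n] : (0:ℝ) ≤ 3 * a0 n + a1 n) (by linarith [hB.2] : (0:ℝ) ≤ M - D f (n + 1)),
    mul_nonneg (by linarith [ha1 n, ha2 n] : (0:ℝ) ≤ a1 n + 3 * a2 n) (by linarith [hCc.1] : (0:ℝ) ≤ D f n + M),
    mul_nonneg (by linarith [ha1 n, ha2 n] : (0:ℝ) ≤ a1 n + 3 * a2 n) (by linarith [hCc.2] : (0:ℝ) ≤ M - D f n),
    mul_nonneg (ha2 n) (by linarith [hDd.1] : (0:ℝ) ≤ D f (n - 1) + M),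
    mul_nonneg (ha2 n) (by linarith [hDd.2] : (0:ℝ) ≤ M - D f (n - 1)),
    mul_nonneg (ha1 n) hM0, hsum n]
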